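/- If a point i ∈ ℝ^{M-1} does not lie on the hyperplane spanned by the (projected) rows e_1,…,ê_q,…,e_M of L, then ⟨v_q, i⟩ = 1 + γ/B_q, where w_q = (B_q/γ)(v_q, 1, −1) is the q-th column of L^{-1}; consequently ⟨v_q, i⟩ > 1 if B_q > 0 and ⟨v_q, i⟩ < 1 if B_q < 0, for points i in general position relative to that hyperplane on the appropriate side. -/

import Mathlib

open Matrix

/-- Computation in the proof of Corollary 3.2, 1): with `w_q = (B_q/γ)(v_q,1,−1)`
the `q`-th column of `L⁻¹`, any (projected) vertex `J = e_i'` (`i ≤ M`) not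
lying on the hyperplane spanned by the projected rows `e_1,…,ê_q,…,e_M`
satisfies `⟨v_q, J⟩ = 1 + γ/B_q`; consequently `⟨v_q, J⟩ > 1` if `B_q > 0`
and `⟨v_q, J⟩ < 1` if `B_q < 0`. -/
theorem stmt_6 (M : ℕ) (hM : 2 ≤ M)
    (L : Matrix (Fin (M + 1)) (Fin (M + 1)) ℚ)
    (γ : ℚ) (hγ : L.det = γ) (hγpos : 0 < γ)
    (hu : ∀ i : Fin (M + 1), (i : ℕ) < M → L i ⟨M - 1, by omega⟩ = 0)
    (hone : ∀ i : Fin (M + 1), (i : ℕ) < M → L i (Fin.last M) = 1)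
    (hlastrow : ∀ j : Fin (M + 1),
      L (Fin.last M) j = if M - 1 ≤ (j : ℕ) then 1 else 0)
    (p : Fin (M + 1) → (Fin (M - 1) → ℚ))
    (hp : ∀ i j, p i j = L i (Fin.castLE (by omega) j))
    (q : Fin (M + 1)) (B : ℚ) (hB : B ≠ 0) (v : Fin (M - 1) → ℚ)
    (hw : ∀ j : Fin (M + 1), L⁻¹ j q = (B / γ) *
        (if h : (j : ℕ) < M - 1 then v ⟨j, h⟩
         else if (j : ℕ) = M - 1 then 1 else -1))
    (i : Fin (M + 1)) (hi : (i : ℕ) < M)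
    (hoff : p i ∉ affineSpan ℚ (p '' {j | j ≠ q ∧ (j : ℕ) < M})) :
    (∑ jj : Fin (M - 1), v jj * p i jj = 1 + γ / B) ∧
    (0 < B → 1 < ∑ jj : Fin (M - 1), v jj * p i jj) ∧
    (B < 0 → ∑ jj : Fin (M - 1), v jj * p i jj < 1) := by
  have hγne : γ ≠ 0 := ne_of_gt hγpos
  -- from hoff, i = q
  have hiq : i = q := by
    by_contra h
    exact hoff (subset_affineSpan ℚ _ ⟨i, ⟨h, hi⟩, rfl⟩)
  obtain ⟨m, rfl⟩ : ∃ m, M = m + 2 := ⟨M - 2, by omega⟩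
  have hdet : IsUnit L.det := by rw [hγ]; exact isUnit_iff_ne_zero.mpr hγne
  have h1 : ∑ j, L i j * L⁻¹ j q = 1 := by
    have h2 := congrFun (congrFun (Matrix.mul_nonsing_inv L hdet) i) q
    rw [Matrix.mul_apply] at h2
    rw [h2, hiq, Matrix.one_apply_eq]
  rw [Fin.sum_univ_castSucc, Fin.sum_univ_castSucc] at h1
  have e1 : L i ((Fin.last (m+1)).castSucc) = 0 := by
    exact hu i hi
  have e2 : L i (Fin.last (m+2)) = 1 := hone i hi
  have e3 : ∀ jj : Fin (m + 1),
      L⁻¹ ((jj.castSucc).castSucc) q = (B / γ) * v jj := by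
    intro jj
    rw [hw]
    have hlt : ((jj.castSucc).castSucc : ℕ) < m + 2 - 1 := by
      simp
      have := jj.isLt; omega
    rw [dif_pos hlt]
    congr 1
  have e4 : L⁻¹ ((Fin.last (m+1)).castSucc) q = (B / γ) * 1 := by
    rw [hw]
    norm_num
  have e5 : L⁻¹ (Fin.last (m+2)) q = (B / γ) * (-1) := by
    rw [hw]
    norm_num
  rw [e1, e2, e4, e5] at h1
  simp only [e3] at h1
  have hsum : ∑ jj : Fin (m + 1), v jj * p i jj
      = ∑ jj : Fin (m + 1), L i ((jj.castSucc).castSucc) * v jj := by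
    apply Finset.sum_congr rfl
    intro jj _
    rw [hp]
    rw [mul_comm]
    congr 1
  have hS : ∑ jj : Fin (m + 1), v jj * p i jj = 1 + γ / B := by
    rw [hsum]
    have hh : (∑ jj : Fin (m+1), L i ((jj.castSucc).castSucc) * (B / γ * v jj))
        = (B / γ) * ∑ jj : Fin (m+1), L i ((jj.castSucc).castSucc) * v jj := by
      rw [Finset.mul_sum]
      apply Finset.sum_congr rfl
      intro jj _
      ring
    rw [hh] at h1
    field_simp at h1 ⊢
    linarith
  refine ⟨hS, ?_, ?_⟩
  · intro hBpos
    have hd : 0 < γ / B := div_pos hγpos hBpos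
    calc (1:ℚ) < 1 + γ / B := by linarith
      _ = _ := hS.symm
  · intro hBneg
    have hd : γ / B < 0 := div_neg_of_pos_of_neg hγpos hBneg
    calc ∑ jj : Fin (m + 2 - 1), v jj * p i jj = 1 + γ / B := hS
      _ < 1 := by linarith
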